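/- Let k ≥ 5 and let G be a planar graph on vertex set {u₁, u₂} ∪ B with every vertex of B adjacent to both u₁ and u₂, such that G contains no member of Θ_k as a subgraph. If G[B] is a disjoint union of paths with two longest path orders n₁ ≥ n₂, then n₁ + n₂ ≤ k−3. -/

import Mathlib

open SimpleGraph

/-- The adjacency spectral radius of a finite simple graph. -/
noncomputable def specRad {V : Type*} [Fintype V] [DecidableEq V] (G : SimpleGraph V) : ℝ :=
  letI := Classical.decRel G.Adj
  sSup ((fun μ : ℝ => |μ|) '' spectrum ℝ (G.adjMatrix ℝ))

/-- `G` contains a copy of `H` as a subgraph. -/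
def Contains {V W : Type*} (G : SimpleGraph V) (H : SimpleGraph W) : Prop :=
  ∃ f : W ↪ V, ∀ a b, H.Adj a b → G.Adj (f a) (f b)

/-- `G` contains `C_{l,l}`: two cycles of length `l` sharing exactly one vertex. -/
def ContainsCll {V : Type*} (G : SimpleGraph V) (l : ℕ) : Prop :=
  ∃ (u : V) (c₁ c₂ : G.Walk u u), c₁.IsCycle ∧ c₂.IsCycle ∧ c₁.length = l ∧ c₂.length = l ∧
    ∀ v, v ∈ c₁.support → v ∈ c₂.support → v = u

/-- Theta graph on `k` vertices: the cycle `0,1,…,k-1` plus a chord from `0` to `a`. -/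
def thetaGraph (k a : ℕ) : SimpleGraph (Fin k) :=
  SimpleGraph.fromRel (fun i j =>
    (j : ℕ) = (i : ℕ) + 1 ∨ ((i : ℕ) = k - 1 ∧ (j : ℕ) = 0) ∨ ((i : ℕ) = 0 ∧ (j : ℕ) = a))

/-- `G` contains some member of `Θ_k`, the set of Theta graphs on `k` vertices. -/
def ContainsTheta {V : Type*} (G : SimpleGraph V) (k : ℕ) : Prop :=
  ∃ a, 2 ≤ a ∧ a ≤ k - 2 ∧ Contains G (thetaGraph k a)

/-- The join of two graphs: all edges between the two vertex sets are added. -/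
def joinG {V W : Type*} (G : SimpleGraph V) (H : SimpleGraph W) : SimpleGraph (V ⊕ W) where
  Adj a b := match a, b with
    | Sum.inl a, Sum.inl b => G.Adj a b
    | Sum.inr a, Sum.inr b => H.Adj a b
    | Sum.inl _, Sum.inr _ => True
    | Sum.inr _, Sum.inl _ => True
  symm := by
    refine ⟨?_⟩
    rintro (a | a) (b | b) h
    · exact G.adj_symm h
    · trivial
    · trivial
    · exact H.adj_symm h
  loopless := by
    refine ⟨?_⟩
    rintro (a | a) h
    · exact G.irrefl h
    · exact H.irrefl h

/-- The disjoint union of `t` paths, the `i`-th having `f i` vertices. -/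
def pathsUnion (t : ℕ) (f : ℕ → ℕ) : SimpleGraph (Σ i : Fin t, Fin (f i.1)) where
  Adj a b := a.1 = b.1 ∧ ((a.2 : ℕ) + 1 = (b.2 : ℕ) ∨ (b.2 : ℕ) + 1 = (a.2 : ℕ))
  symm := by
    refine ⟨?_⟩
    rintro ⟨i, a⟩ ⟨j, b⟩ ⟨h₁, h₂⟩
    exact ⟨h₁.symm, h₂.symm⟩
  loopless := by
    refine ⟨?_⟩
    rintro ⟨i, a⟩ ⟨-, h⟩
    omega

/-- `H` is a minor of `G`: disjoint connected branch sets, one for each vertex of `H`,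
with edges of `G` between branch sets corresponding to edges of `H`. -/
def IsMinor {V W : Type*} (H : SimpleGraph W) (G : SimpleGraph V) : Prop :=
  ∃ B : W → Set V, (∀ w, (B w).Nonempty) ∧ (∀ w, (G.induce (B w)).Connected) ∧
    (∀ w₁ w₂, w₁ ≠ w₂ → Disjoint (B w₁) (B w₂)) ∧
    ∀ w₁ w₂, H.Adj w₁ w₂ → ∃ v₁ ∈ B w₁, ∃ v₂ ∈ B w₂, G.Adj v₁ v₂

/-- Planarity via Wagner's theorem: no `K₅` minor and no `K₃,₃` minor. -/
def IsPlanar {V : Type*} (G : SimpleGraph V) : Prop :=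
  ¬ IsMinor (⊤ : SimpleGraph (Fin 5)) G ∧
  ¬ IsMinor (completeBipartiteGraph (Fin 3) (Fin 3)) G

theorem stmt14 (k : ℕ) (hk : 5 ≤ k) {B : Type*} [Fintype B]
    (G : SimpleGraph (Fin 2 ⊕ B)) (hpl : IsPlanar G)
    (hcard : k - 1 ≤ Fintype.card B)
    (hspan : ∀ (i : Fin 2) (v : B), G.Adj (Sum.inl i) (Sum.inr v))
    (hfree : ¬ ContainsTheta G k)
    (hacyc : (G.induce (Set.range Sum.inr)).IsAcyclic)
    (hdeg : ∀ v : B, {w : B | G.Adj (Sum.inr v) (Sum.inr w)}.ncard ≤ 2) :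
    ∀ a b : ℕ, 1 ≤ a → 1 ≤ b → a + b = k - 2 →
      ¬ Contains (G.induce (Set.range Sum.inr))
        (pathsUnion 2 (fun i => if i = 0 then a else b)) := by
  intro a b ha hb hab hcon
  obtain ⟨g, hg⟩ := hcon
  have hk2 : k = a + b + 2 := by omega
  have e0 : (if (((0 : Fin 2) : ℕ)) = 0 then a else b) = a := by norm_num
  have e1 : (if (((1 : Fin 2) : ℕ)) = 0 then a else b) = b := by norm_num
  -- path vertex functions
  set v0 : Fin a → Fin 2 ⊕ B := fun j =>
    ((g ⟨(0 : Fin 2), Fin.cast e0.symm j⟩ : _) : Fin 2 ⊕ B) with hv0def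
  set v1 : Fin b → Fin 2 ⊕ B := fun j =>
    ((g ⟨(1 : Fin 2), Fin.cast e1.symm j⟩ : _) : Fin 2 ⊕ B) with hv1def
  have hv0mem : ∀ j, v0 j ∈ Set.range (Sum.inr : B → Fin 2 ⊕ B) := fun j =>
    (g ⟨(0 : Fin 2), Fin.cast e0.symm j⟩).2
  have hv1mem : ∀ j, v1 j ∈ Set.range (Sum.inr : B → Fin 2 ⊕ B) := fun j =>
    (g ⟨(1 : Fin 2), Fin.cast e1.symm j⟩).2
  have hv0inj : ∀ j j', v0 j = v0 j' → (j : ℕ) = (j' : ℕ) := by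
    intro j j' h
    have h2 := g.injective (Subtype.ext h)
    have h3 := congrArg (fun s : (Σ i : Fin 2, Fin (if (i : ℕ) = 0 then a else b)) =>
      ((s.2 : ℕ))) h2
    simpa using h3
  have hv1inj : ∀ j j', v1 j = v1 j' → (j : ℕ) = (j' : ℕ) := by
    intro j j' h
    have h2 := g.injective (Subtype.ext h)
    have h3 := congrArg (fun s : (Σ i : Fin 2, Fin (if (i : ℕ) = 0 then a else b)) =>
      ((s.2 : ℕ))) h2
    simpa using h3
  have hv01 : ∀ j j', v0 j ≠ v1 j' := by
    intro j j' h
    have h2 := g.injective (Subtype.ext h)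
    have h3 := congrArg (fun s : (Σ i : Fin 2, Fin (if (i : ℕ) = 0 then a else b)) =>
      ((s.1 : ℕ))) h2
    simp at h3
  have hadj0 : ∀ (j j' : Fin a), (j : ℕ) + 1 = (j' : ℕ) → G.Adj (v0 j) (v0 j') := by
    intro j j' h
    exact hg ⟨(0 : Fin 2), Fin.cast e0.symm j⟩ ⟨(0 : Fin 2), Fin.cast e0.symm j'⟩
      ⟨rfl, Or.inl (by simpa using h)⟩
  have hadj1 : ∀ (j j' : Fin b), (j : ℕ) + 1 = (j' : ℕ) → G.Adj (v1 j) (v1 j') := by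
    intro j j' h
    exact hg ⟨(1 : Fin 2), Fin.cast e1.symm j⟩ ⟨(1 : Fin 2), Fin.cast e1.symm j'⟩
      ⟨rfl, Or.inl (by simpa using h)⟩
  -- the embedding of the theta graph
  set f : Fin k → Fin 2 ⊕ B := fun i =>
    if h0 : (i : ℕ) = 0 then Sum.inl 0
    else if h1 : (i : ℕ) ≤ a then v0 ⟨(i : ℕ) - 1, by omega⟩
    else if h2 : (i : ℕ) = a + 1 then Sum.inl 1
    else v1 ⟨(i : ℕ) - (a + 2), by have := i.isLt; omega⟩ with hfdef
  have hfz : ∀ i : Fin k, (i : ℕ) = 0 → f i = Sum.inl 0 := by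
    intro i h; simp only [hfdef]; rw [dif_pos h]
  have hf0 : ∀ (i : Fin k) (h1 : 1 ≤ (i : ℕ)) (h2 : (i : ℕ) ≤ a),
      f i = v0 ⟨(i : ℕ) - 1, by omega⟩ := by
    intro i h1 h2; simp only [hfdef]; rw [dif_neg (by omega), dif_pos h2]
  have hfu : ∀ i : Fin k, (i : ℕ) = a + 1 → f i = Sum.inl 1 := by
    intro i h; simp only [hfdef]; rw [dif_neg (by omega), dif_neg (by omega), dif_pos h]
  have hf1 : ∀ (i : Fin k) (h1 : a + 2 ≤ (i : ℕ)),
      f i = v1 ⟨(i : ℕ) - (a + 2), by have := i.isLt; omega⟩ := by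
    intro i h1; simp only [hfdef]
    rw [dif_neg (by omega), dif_neg (by omega), dif_neg (by omega)]
  have hinl0 : ∀ j u, v0 j ≠ Sum.inl u := by
    intro j u h
    obtain ⟨w, hw⟩ := hv0mem j
    rw [← hw] at h; exact Sum.inr_ne_inl h
  have hinl1 : ∀ j u, v1 j ≠ Sum.inl u := by
    intro j u h
    obtain ⟨w, hw⟩ := hv1mem j
    rw [← hw] at h; exact Sum.inr_ne_inl h
  have regions : ∀ i : Fin k, (i : ℕ) = 0 ∨ (1 ≤ (i : ℕ) ∧ (i : ℕ) ≤ a) ∨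
      (i : ℕ) = a + 1 ∨ (a + 2 ≤ (i : ℕ)) := by intro i; omega
  have finj : Function.Injective f := by
    intro i j hij
    have hik := i.isLt; have hjk := j.isLt
    apply Fin.ext
    rcases regions i with hi | ⟨hi1, hi2⟩ | hi | hi <;>
      rcases regions j with hj | ⟨hj1, hj2⟩ | hj | hj
    · omega
    · rw [hfz i hi, hf0 j hj1 hj2] at hij; exact absurd hij.symm (hinl0 _ _)
    · rw [hfz i hi, hfu j hj] at hij; simp at hij
    · rw [hfz i hi, hf1 j hj] at hij; exact absurd hij.symm (hinl1 _ _)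
    · rw [hf0 i hi1 hi2, hfz j hj] at hij; exact absurd hij (hinl0 _ _)
    · rw [hf0 i hi1 hi2, hf0 j hj1 hj2] at hij
      have := hv0inj _ _ hij; simp at this; omega
    · rw [hf0 i hi1 hi2, hfu j hj] at hij; exact absurd hij (hinl0 _ _)
    · rw [hf0 i hi1 hi2, hf1 j hj] at hij; exact absurd hij (hv01 _ _)
    · rw [hfu i hi, hfz j hj] at hij; simp at hij
    · rw [hfu i hi, hf0 j hj1 hj2] at hij; exact absurd hij.symm (hinl0 _ _)
    · omega
    · rw [hfu i hi, hf1 j hj] at hij; exact absurd hij.symm (hinl1 _ _)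
    · rw [hf1 i hi, hfz j hj] at hij; exact absurd hij (hinl1 _ _)
    · rw [hf1 i hi, hf0 j hj1 hj2] at hij; exact absurd hij.symm (hv01 _ _)
    · rw [hf1 i hi, hfu j hj] at hij; exact absurd hij (hinl1 _ _)
    · rw [hf1 i hi, hf1 j hj] at hij
      have := hv1inj _ _ hij; simp at this; omega
  have hspan' : ∀ (u : Fin 2) (x : Fin 2 ⊕ B),
      x ∈ Set.range (Sum.inr : B → Fin 2 ⊕ B) → G.Adj (Sum.inl u) x := by
    rintro u x ⟨w, rfl⟩; exact hspan u w
  obtain ⟨a', ha'1, ha'2, ha'3⟩ : ∃ a', 2 ≤ a' ∧ a' ≤ k - 2 ∧ a' ≠ a + 1 := by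
    by_cases hA : a = 1
    · exact ⟨3, by omega, by omega, by omega⟩
    · exact ⟨a, by omega, by omega, by omega⟩
  have hfmem : ∀ i : Fin k, (i : ℕ) ≠ 0 → (i : ℕ) ≠ a + 1 →
      f i ∈ Set.range (Sum.inr : B → Fin 2 ⊕ B) := by
    intro i h1 h2
    rcases regions i with hi | ⟨hi1, hi2⟩ | hi | hi
    · omega
    · rw [hf0 i hi1 hi2]; exact hv0mem _
    · omega
    · rw [hf1 i hi]; exact hv1mem _
  have key : ∀ i j : Fin k,
      ((j : ℕ) = (i : ℕ) + 1 ∨ ((i : ℕ) = k - 1 ∧ (j : ℕ) = 0) ∨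
        ((i : ℕ) = 0 ∧ (j : ℕ) = a')) → G.Adj (f i) (f j) := by
    intro i j hr
    have hik := i.isLt; have hjk := j.isLt
    rcases hr with hr | ⟨hr1, hr2⟩ | ⟨hr1, hr2⟩
    · rcases regions i with hi | ⟨hi1, hi2⟩ | hi | hi
      · rw [hfz i hi, hf0 j (by omega) (by omega)]
        exact hspan' _ _ (hv0mem _)
      · rcases Nat.lt_or_ge (i : ℕ) a with hia | hia
        · rw [hf0 i hi1 hi2, hf0 j (by omega) (by omega)]
          apply hadj0; simp; omega
        · rw [hf0 i hi1 hi2, hfu j (by omega)]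
          exact (hspan' _ _ (hv0mem _)).symm
      · rw [hfu i hi, hf1 j (by omega)]
        exact hspan' _ _ (hv1mem _)
      · rw [hf1 i hi, hf1 j (by omega)]
        apply hadj1; simp; omega
    · rw [hf1 i (by omega), hfz j hr2]
      exact (hspan' _ _ (hv1mem _)).symm
    · rw [hfz i hr1]
      apply hspan'
      apply hfmem j
      · omega
      · omega
  apply hfree
  refine ⟨a', ha'1, ha'2, ⟨f, finj⟩, ?_⟩
  intro i j hadj
  rw [thetaGraph, SimpleGraph.fromRel_adj] at hadj
  obtain ⟨-, hr | hr⟩ := hadj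
  · exact key i j hr
  · exact (key j i hr).symm
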